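/- Existence and uniqueness of the endemic equilibrium (algebraic part): assume A is symmetric and irreducible, ν_S = ν_I = ν > 0, and α(B + V) > 0. Then there exists a unique vector I* ∈ ℝ^ℓ with 0 < I*_j < 1/ℓ for all j satisfying, for every j, λ_j (1 − ℓ I*_j) I*_j − γ_j I*_j + ν Σ_{k≠j} (a_{kj} I*_k − a_{jk} I*_j) = 0 (equivalently, (νD − 𝔸 + B) I* = ℓ · diag(I*) B I*). -/

import Mathlib

open Finset Filter Topology

/-- The connectivity matrix `A` is irreducible. -/
def IrreducibleMat (ℓ : ℕ) (A : Matrix (Fin ℓ) (Fin ℓ) ℝ) : Prop :=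
  ∀ j k : Fin ℓ, j ≠ k → ∃ s : ℕ, 2 ≤ s ∧ ∃ c : ℕ → Fin ℓ,
    c 0 = j ∧ c (s - 1) = k ∧ ∀ i, i < s - 1 → A (c i) (c (i + 1)) ≠ 0

lemma cubic_nonpos_small_pos (a b c ε : ℝ) (hε : 0 < ε)
    (H : ∀ h : ℝ, 0 < h → h ≤ ε → h * (c + b * h + a * h ^ 2) ≤ 0) : c ≤ 0 := by
  by_contra hc
  push_neg at hc
  set h : ℝ := min ε (min 1 (c / (2 * (|a| + |b| + 1)))) with hh
  have hd : 0 < 2 * (|a| + |b| + 1) := by positivity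
  have hpos : 0 < h := by
    apply lt_min hε (lt_min one_pos _)
    positivity
  have h1 : h ≤ 1 := le_trans (min_le_right _ _) (min_le_left _ _)
  have h2 : h ≤ c / (2 * (|a| + |b| + 1)) := le_trans (min_le_right _ _) (min_le_right _ _)
  have hb : b * h + a * h ^ 2 ≥ -(c / 2) := by
    have h2' : h * (2 * (|a| + |b| + 1)) ≤ c := by
      rw [← le_div_iff₀ hd]; exact h2
    have hsq : h ^ 2 ≤ h := by nlinarith
    have hab : -(|a| + |b|) * h ≤ b * h + a * h ^ 2 := by
      nlinarith [neg_abs_le a, neg_abs_le b, le_abs_self a, le_abs_self b, sq_nonneg h]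
    nlinarith
  have := H h hpos (min_le_left _ _)
  nlinarith

lemma cubic_nonpos_small_neg (a b c ε : ℝ) (hε : 0 < ε)
    (H : ∀ h : ℝ, -ε ≤ h → h < 0 → h * (c + b * h + a * h ^ 2) ≤ 0) : 0 ≤ c := by
  have := cubic_nonpos_small_pos (-a) b (-c) ε hε (fun h h0 hhε => by
    have := H (-h) (by linarith) (by linarith)
    nlinarith)
  linarith

lemma quad_update (n : ℕ) (M : Fin n → Fin n → ℝ) (hsymm : ∀ p q, M p q = M q p)
    (x : Fin n → ℝ) (j : Fin n) (s : ℝ) :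
    ∑ p, ∑ q, M p q * (Function.update x j s) p * (Function.update x j s) q
      = (∑ p, ∑ q, M p q * x p * x q) + 2 * (s - x j) * (∑ k, M j k * x k)
        + M j j * (s - x j) ^ 2 := by
  classical
  set h : ℝ := s - x j with hh
  have hup : ∀ q, Function.update x j s q = x q + (if q = j then h else 0) := by
    intro q
    rcases eq_or_ne q j with rfl | hq
    · simp [hh]
    · simp [Function.update_of_ne hq, hq]
  have key : ∀ p q, M p q * (Function.update x j s) p * (Function.update x j s) q
      = M p q * x p * x q + ((if p = j then M j q * h * x q else 0)
        + ((if q = j then M p j * x p * h else 0)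
        + (if p = j then (if q = j then M j j * h * h else 0) else 0))) := by
    intro p q
    by_cases hp : p = j <;> by_cases hq : q = j <;> simp [hup, hp, hq] <;> ring
  simp only [key, Finset.sum_add_distrib]
  have eA : ∀ p, (∑ q : Fin n, if p = j then M j q * h * x q else 0)
      = if p = j then ∑ q, M j q * h * x q else 0 := fun p => by split <;> simp
  have eB : ∀ p, (∑ q : Fin n, if p = j then (if q = j then M j j * h * h else 0) else 0)
      = if p = j then M j j * h * h else 0 := fun p => by
    split
    · exact Fintype.sum_ite_eq' j (fun q => M j j * h * h)
    · simp
  have eC : ∀ p, (∑ q : Fin n, if q = j then M p j * x p * h else 0) = M p j * x p * h :=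
    fun p => Fintype.sum_ite_eq' j (fun q => M p j * x p * h)
  simp only [eA, eB, eC]
  rw [Fintype.sum_ite_eq' j (fun p => ∑ q, M j q * h * x q),
      Fintype.sum_ite_eq' j (fun p => M j j * h * h)]
  have e3 : ∑ p, M p j * x p * h = ∑ p, M j p * x p * h :=
    Finset.sum_congr rfl fun p _ => by rw [hsymm p j]
  have e4 : ∑ q, M j q * h * x q = (∑ k, M j k * x k) * h := by
    rw [Finset.sum_mul]; exact Finset.sum_congr rfl fun q _ => by ring
  have e5 : ∑ p, M j p * x p * h = (∑ k, M j k * x k) * h := by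
    rw [Finset.sum_mul]
  rw [e3, e4, e5]; ring

lemma cube_update (n : ℕ) (lam : Fin n → ℝ) (x : Fin n → ℝ) (j : Fin n) (s : ℝ) :
    ∑ p, lam p * (Function.update x j s) p ^ 3
      = (∑ p, lam p * x p ^ 3) - lam j * x j ^ 3 + lam j * s ^ 3 := by
  classical
  rw [← Finset.add_sum_erase _ (fun p => lam p * (Function.update x j s) p ^ 3) (mem_univ j),
      ← Finset.add_sum_erase _ (fun p => lam p * x p ^ 3) (mem_univ j)]
  have : ∑ p ∈ univ.erase j, lam p * (Function.update x j s) p ^ 3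
      = ∑ p ∈ univ.erase j, lam p * x p ^ 3 :=
    Finset.sum_congr rfl fun p hp => by
      rw [Function.update_of_ne (Finset.ne_of_mem_erase hp)]
  rw [this, Function.update_self]; ring

lemma rayleigh_pos (n : ℕ) (M : Fin n → Fin n → ℝ)
    (hMoff : ∀ p q, p ≠ q → 0 ≤ M p q)
    (Mc : Matrix (Fin n) (Fin n) ℂ) (hMc : ∀ p q, Mc p q = (M p q : ℂ))
    (δ : ℂ) (hδ : δ ∈ spectrum ℂ Mc) (hδre : 0 < δ.re) :
    ∃ w : Fin n → ℝ, (∀ p, 0 ≤ w p) ∧ (∃ p, w p ≠ 0) ∧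
      0 < ∑ p, ∑ q, M p q * w p * w q := by
  classical
  have hδ' := spectrum.mem_iff.mp hδ
  have hdet0 : (algebraMap ℂ (Matrix (Fin n) (Fin n) ℂ) δ - Mc).det = 0 := by
    by_contra hne
    exact hδ' ((Matrix.isUnit_iff_isUnit_det _).mpr (isUnit_iff_ne_zero.mpr hne))
  obtain ⟨v, hv0, hveq⟩ := (Matrix.exists_mulVec_eq_zero_iff).mpr hdet0
  have hev : ∀ p, ∑ k, (M p k : ℂ) * v k = δ * v p := by
    intro p
    have h := congrFun hveq p
    simp only [Matrix.sub_mulVec, Algebra.algebraMap_eq_smul_one,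
      Matrix.smul_mulVec, Matrix.one_mulVec, Pi.sub_apply, Pi.smul_apply,
      smul_eq_mul, Pi.zero_apply, sub_eq_zero] at h
    rw [h]
    simp [Matrix.mulVec, dotProduct, hMc]
  set w : Fin n → ℝ := fun p => ‖v p‖ with hw
  have hw0 : ∀ p, 0 ≤ w p := fun p => norm_nonneg _
  obtain ⟨p0, hp0⟩ := Function.ne_iff.mp hv0
  have hwne : ∃ p, w p ≠ 0 := ⟨p0, by simpa [hw] using hp0⟩
  set N : ℝ := ∑ p, Complex.normSq (v p) with hN
  have hNpos : 0 < N := by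
    refine Finset.sum_pos' (fun p _ => Complex.normSq_nonneg _) ⟨p0, mem_univ _, ?_⟩
    exact Complex.normSq_pos.mpr hp0
  have hray : ∀ p, ((starRingEnd ℂ) (v p) * (δ * v p)).re = δ.re * Complex.normSq (v p) := by
    intro p
    have e : (starRingEnd ℂ) (v p) * (δ * v p) = δ * ((Complex.normSq (v p) : ℝ) : ℂ) := by
      rw [← Complex.mul_conj (v p)]; ring
    rw [e]
    simp [Complex.mul_re]
  have hsum2 : ∀ p, ((starRingEnd ℂ) (v p) * (δ * v p)).re
      = ∑ k, M p k * ((starRingEnd ℂ) (v p) * v k).re := by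
    intro p
    rw [← hev p, Finset.mul_sum, Complex.re_sum]
    refine Finset.sum_congr rfl fun k _ => ?_
    have e : (starRingEnd ℂ) (v p) * ((M p k : ℂ) * v k)
        = (M p k : ℂ) * ((starRingEnd ℂ) (v p) * v k) := by ring
    rw [e]
    simp [Complex.mul_re]
  have hterm : ∀ p k, M p k * ((starRingEnd ℂ) (v p) * v k).re ≤ M p k * (w p * w k) := by
    intro p k
    rcases eq_or_ne p k with rfl | hpk
    · have e : ((starRingEnd ℂ) (v p) * v p).re = w p * w p := by
        rw [mul_comm, Complex.mul_conj]
        simp [hw, ← Complex.sq_norm, sq]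
      rw [e]
    · have h1 : ((starRingEnd ℂ) (v p) * v k).re ≤ w p * w k := by
        calc ((starRingEnd ℂ) (v p) * v k).re ≤ ‖(starRingEnd ℂ) (v p) * v k‖ :=
              Complex.re_le_norm _
          _ = w p * w k := by rw [norm_mul, Complex.norm_conj]
      exact mul_le_mul_of_nonneg_left h1 (hMoff p k hpk)
  refine ⟨w, hw0, hwne, ?_⟩
  have hchain : δ.re * N ≤ ∑ p, ∑ k, M p k * (w p * w k) := by
    calc δ.re * N = ∑ p, ((starRingEnd ℂ) (v p) * (δ * v p)).re := by
          rw [hN, Finset.mul_sum]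
          exact Finset.sum_congr rfl fun p _ => (hray p).symm
      _ = ∑ p, ∑ k, M p k * ((starRingEnd ℂ) (v p) * v k).re :=
          Finset.sum_congr rfl fun p _ => hsum2 p
      _ ≤ ∑ p, ∑ k, M p k * (w p * w k) :=
          Finset.sum_le_sum fun p _ => Finset.sum_le_sum fun k _ => hterm p k
  have hpos : 0 < ∑ p, ∑ k, M p k * (w p * w k) := lt_of_lt_of_le (by positivity) hchain
  calc (0:ℝ) < ∑ p, ∑ k, M p k * (w p * w k) := hpos
    _ = ∑ p, ∑ q, M p q * w p * w q :=
        Finset.sum_congr rfl fun p _ => Finset.sum_congr rfl fun q _ => by ring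

set_option maxHeartbeats 1600000

/-- Existence and uniqueness of the endemic equilibrium (algebraic part): if `A` is
symmetric and irreducible, `ν > 0` and the stability modulus of `B + V` is positive
(i.e. `B + V` has an eigenvalue with positive real part), then there is a unique vector
`I*` with `0 < I*_j < 1/ℓ` for all `j` satisfying
`λ_j (1 − ℓ I*_j) I*_j − γ_j I*_j + ν Σ_{k≠j} (a_{kj} I*_k − a_{jk} I*_j) = 0` for all `j`. -/
theorem endemic_equilibrium_exists_unique
    (ℓ : ℕ) (hℓ : 1 ≤ ℓ)
    (lam gam : Fin ℓ → ℝ) (hlam : ∀ j, 0 < lam j) (hgam : ∀ j, 0 < gam j)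
    (ν : ℝ) (hν : 0 < ν)
    (A : Matrix (Fin ℓ) (Fin ℓ) ℝ) (hA : ∀ j k, 0 ≤ A j k) (hAdiag : ∀ j, A j j = 0)
    (hsym : A.IsSymm) (hirr : IrreducibleMat ℓ A)
    (D : Matrix (Fin ℓ) (Fin ℓ) ℝ)
    (hD : ∀ j k, D j k = if j = k then -∑ i ∈ univ.erase j, A j i else A j k)
    (V : Matrix (Fin ℓ) (Fin ℓ) ℝ)
    (hV : V = ν • D - Matrix.diagonal gam)
    (halpha : ∃ δ ∈ spectrum ℂ ((Matrix.diagonal lam + V).map (Complex.ofReal ·)),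
      0 < δ.re) :
    ∃! Istar : Fin ℓ → ℝ,
      (∀ j, 0 < Istar j ∧ Istar j < (ℓ : ℝ)⁻¹) ∧
      ∀ j, lam j * (1 - (ℓ : ℝ) * Istar j) * Istar j - gam j * Istar j
        + ν * ∑ k ∈ univ.erase j, (A k j * Istar k - A j k * Istar j) = 0 := by
  classical
  set L : ℝ := (ℓ : ℝ) with hLdef
  have hL : (0:ℝ) < L := by
    have : (1:ℝ) ≤ (ℓ:ℝ) := by exact_mod_cast hℓ
    linarith
  have hLinv : (0:ℝ) < L⁻¹ := by positivity
  set M : Fin ℓ → Fin ℓ → ℝ :=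
    fun j k => if j = k then lam j - gam j - ν * ∑ i ∈ univ.erase j, A j i else ν * A j k
    with hMdef
  have hMsymm : ∀ p q, M p q = M q p := by
    intro p q
    rcases eq_or_ne p q with rfl | hpq
    · rfl
    · simp only [hMdef, if_neg hpq, if_neg (Ne.symm hpq)]
      rw [hsym.apply q p]
  have hMoffval : ∀ p q, p ≠ q → M p q = ν * A p q := by
    intro p q hpq; simp [hMdef, hpq]
  have hMoff : ∀ p q, p ≠ q → 0 ≤ M p q := by
    intro p q hpq; rw [hMoffval p q hpq]; exact mul_nonneg hν.le (hA p q)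
  have hrowsum : ∀ j, ∑ k, M j k = lam j - gam j := by
    intro j
    rw [← Finset.add_sum_erase _ (fun k => M j k) (mem_univ j)]
    have h1 : ∑ k ∈ univ.erase j, M j k = ν * ∑ k ∈ univ.erase j, A j k := by
      rw [Finset.mul_sum]
      exact Finset.sum_congr rfl fun k hk => by
        rw [hMoffval j k (Ne.symm (Finset.ne_of_mem_erase hk))]
    rw [h1]
    simp only [hMdef, if_pos rfl]
    ring
  -- entries of the matrix in halpha
  have hBV : ∀ p q, (Matrix.diagonal lam + V) p q = M p q := by
    intro p q
    rcases eq_or_ne p q with rfl | hpq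
    · simp [hV, Matrix.add_apply, Matrix.sub_apply, Matrix.smul_apply,
        Matrix.diagonal_apply_eq, hD, hMdef]
      ring
    · simp [hV, Matrix.add_apply, Matrix.sub_apply, Matrix.smul_apply,
        Matrix.diagonal_apply_ne _ hpq, hD, hpq, hMdef]
  obtain ⟨δ, hδ, hδre⟩ := halpha
  obtain ⟨w, hw0, hwne, hQw⟩ := rayleigh_pos ℓ M hMoff
    ((Matrix.diagonal lam + V).map (Complex.ofReal ·))
    (fun p q => by simp [Matrix.map_apply, hBV]) δ hδ hδre
  -- the energy functional
  set Q : (Fin ℓ → ℝ) → ℝ := fun x => ∑ p, ∑ q, M p q * x p * x q with hQdef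
  set S : (Fin ℓ → ℝ) → ℝ := fun x => ∑ p, lam p * x p ^ 3 with hSdef
  set E : (Fin ℓ → ℝ) → ℝ := fun x => 3 * Q x - 2 * L * S x with hEdef
  set K : Set (Fin ℓ → ℝ) := Set.pi Set.univ (fun _ => Set.Icc (0:ℝ) L⁻¹) with hKdef
  have hKmem : ∀ y : Fin ℓ → ℝ, y ∈ K ↔ ∀ i, 0 ≤ y i ∧ y i ≤ L⁻¹ := by
    intro y
    rw [hKdef, Set.mem_univ_pi]
    exact forall_congr' fun i => Set.mem_Icc
  have hKc : IsCompact K := isCompact_univ_pi fun _ => isCompact_Icc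
  have hKne : K.Nonempty := ⟨fun _ => 0, (hKmem _).mpr fun i => ⟨le_refl _, hLinv.le⟩⟩
  have hQcont : Continuous Q := by
    apply continuous_finset_sum _ fun p _ => ?_
    apply continuous_finset_sum _ fun q _ => ?_
    exact (continuous_const.mul (continuous_apply p)).mul (continuous_apply q)
  have hScont : Continuous S := by
    apply continuous_finset_sum _ fun p _ => ?_
    exact continuous_const.mul ((continuous_apply p).pow 3)
  have hEcont : Continuous E := (continuous_const.mul hQcont).sub (continuous_const.mul hScont)
  obtain ⟨x, hxK, hxmax⟩ := hKc.exists_isMaxOn hKne hEcont.continuousOn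
  have hx01 := (hKmem x).mp hxK
  have hx0 : ∀ j, 0 ≤ x j := fun j => (hx01 j).1
  have hx1 : ∀ j, x j ≤ L⁻¹ := fun j => (hx01 j).2
  set cfun : Fin ℓ → ℝ := fun j => (∑ k, M j k * x k) - L * lam j * x j ^ 2 with hcdef
  -- energy difference identity
  have hEdiff : ∀ (j : Fin ℓ) (s : ℝ),
      E (Function.update x j s) - E x
      = (s - x j) * (6 * cfun j + (3 * M j j - 6 * L * lam j * x j) * (s - x j)
        + (-(2 * L * lam j)) * (s - x j) ^ 2) := by
    intro j s
    simp only [hEdef, hQdef, hSdef, hcdef]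
    rw [quad_update ℓ M hMsymm x j s, cube_update ℓ lam x j s]
    ring
  have hcle : ∀ j, x j < L⁻¹ → cfun j ≤ 0 := by
    intro j hj
    have h6 : 6 * cfun j ≤ 0 := by
      apply cubic_nonpos_small_pos (-(2 * L * lam j)) (3 * M j j - 6 * L * lam j * x j)
        (6 * cfun j) (L⁻¹ - x j) (by linarith)
      intro h h0 hhe
      have hmem : Function.update x j (x j + h) ∈ K := by
        rw [hKmem]
        intro i
        rcases eq_or_ne i j with rfl | hij
        · rw [Function.update_self]
          constructor <;> [linarith [hx0 i]; linarith]
        · rw [Function.update_of_ne hij]; exact hx01 i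
      have hle := hxmax hmem
      have := hEdiff j (x j + h)
      simp only [add_sub_cancel_left] at this
      have hEle : E (Function.update x j (x j + h)) - E x ≤ 0 := by
        simp only [Set.mem_setOf_eq] at hle
        linarith [hle]
      linarith [this ▸ hEle]
    linarith
  have hcge : ∀ j, 0 < x j → 0 ≤ cfun j := by
    intro j hj
    have h6 : 0 ≤ 6 * cfun j := by
      apply cubic_nonpos_small_neg (-(2 * L * lam j)) (3 * M j j - 6 * L * lam j * x j)
        (6 * cfun j) (x j) hj
      intro h h0 hhe
      have hmem : Function.update x j (x j + h) ∈ K := by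
        rw [hKmem]
        intro i
        rcases eq_or_ne i j with rfl | hij
        · rw [Function.update_self]
          constructor <;> [linarith; linarith [hx1 i]]
        · rw [Function.update_of_ne hij]; exact hx01 i
      have hle := hxmax hmem
      have := hEdiff j (x j + h)
      simp only [add_sub_cancel_left] at this
      have hEle : E (Function.update x j (x j + h)) - E x ≤ 0 := by
        simp only [Set.mem_setOf_eq] at hle
        linarith [hle]
      linarith [this ▸ hEle]
    linarith
  -- a positive-energy test point
  obtain ⟨p0, hp0⟩ := hwne
  have hp0' : 0 < w p0 := lt_of_le_of_ne (hw0 p0) (Ne.symm hp0)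
  set Sw : ℝ := ∑ p, lam p * w p ^ 3 with hSwdef
  have hSwpos : 0 < Sw := by
    refine Finset.sum_pos' (fun p _ => mul_nonneg (hlam p).le (pow_nonneg (hw0 p) 3))
      ⟨p0, mem_univ _, mul_pos (hlam p0) (pow_pos hp0' 3)⟩
  set Wsum : ℝ := ∑ p, w p with hWdef
  have hWpos : 0 < Wsum :=
    Finset.sum_pos' (fun p _ => hw0 p) ⟨p0, mem_univ _, hp0'⟩
  have hwle : ∀ p, w p ≤ Wsum :=
    fun p => Finset.single_le_sum (fun i _ => hw0 i) (mem_univ p)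
  set t : ℝ := min ((∑ p, ∑ q, M p q * w p * w q) / (2 * L * Sw)) ((L * Wsum)⁻¹) with htdef
  have htpos : 0 < t := lt_min (div_pos hQw (mul_pos (mul_pos two_pos hL) hSwpos)) (inv_pos.mpr (mul_pos hL hWpos))
  have htw : (fun p => t * w p) ∈ K := by
    rw [hKmem]
    intro i
    refine ⟨mul_nonneg htpos.le (hw0 i), ?_⟩
    have h1 : t ≤ (L * Wsum)⁻¹ := min_le_right _ _
    have h2 : t * w i ≤ (L * Wsum)⁻¹ * Wsum := by
      apply mul_le_mul h1 (hwle i) (hw0 i) (inv_pos.mpr (mul_pos hL hWpos)).le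
    calc t * w i ≤ (L * Wsum)⁻¹ * Wsum := h2
      _ = L⁻¹ := by field_simp
  have hQt : Q (fun p => t * w p) = t ^ 2 * ∑ p, ∑ q, M p q * w p * w q := by
    simp only [hQdef, Finset.mul_sum]
    exact Finset.sum_congr rfl fun p _ => Finset.sum_congr rfl fun q _ => by ring
  have hSt : S (fun p => t * w p) = t ^ 3 * Sw := by
    simp only [hSdef, hSwdef, Finset.mul_sum]
    exact Finset.sum_congr rfl fun p _ => by ring
  have hEt : 0 < E (fun p => t * w p) := by
    simp only [hEdef]
    rw [hQt, hSt]
    have h1 : t ≤ (∑ p, ∑ q, M p q * w p * w q) / (2 * L * Sw) := min_le_left _ _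
    have h2 : t * (2 * L * Sw) ≤ ∑ p, ∑ q, M p q * w p * w q := by
      rw [← le_div_iff₀ (mul_pos (mul_pos two_pos hL) hSwpos)]; exact h1
    nlinarith [mul_le_mul_of_nonneg_left h2 (sq_nonneg t),
      mul_pos (mul_pos htpos htpos) hQw]
  -- the maximizer is nonzero
  have hxne : ∃ j, 0 < x j := by
    by_contra hcon
    push_neg at hcon
    have hx00 : x = fun _ => 0 := funext fun j => le_antisymm (hcon j) (hx0 j)
    have hEx0 : E x = 0 := by
      simp [hx00, hEdef, hQdef, hSdef]
    have := hxmax htw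
    simp only [Set.mem_setOf_eq] at this
    rw [hEx0] at this
    linarith
  -- all coordinates positive (uses irreducibility)
  have hpos : ∀ k, 0 < x k := by
    intro k
    by_contra hcon
    have hxk : x k = 0 := le_antisymm (not_lt.mp hcon) (hx0 k)
    obtain ⟨j, hj⟩ := hxne
    have hjk : j ≠ k := fun h => by rw [h, hxk] at hj; exact lt_irrefl _ hj
    obtain ⟨s, hs2, c, hc0, hcs, hcpath⟩ := hirr j k hjk
    have hexP : x (c (s - 1)) = 0 := by rw [hcs]; exact hxk
    have hPex : ∃ i, x (c i) = 0 := ⟨s - 1, hexP⟩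
    set n := Nat.find hPex with hndef
    have hPn : x (c n) = 0 := Nat.find_spec hPex
    have hnle : n ≤ s - 1 := Nat.find_le hexP
    have hn0 : n ≠ 0 := by
      intro h
      rw [h, hc0] at hPn
      rw [hPn] at hj
      exact lt_irrefl _ hj
    have h1n : 1 ≤ n := Nat.one_le_iff_ne_zero.mpr hn0
    have hprev : x (c (n - 1)) ≠ 0 := Nat.find_min hPex (by omega)
    have hprevpos : 0 < x (c (n - 1)) := lt_of_le_of_ne (hx0 _) (Ne.symm hprev)
    have hedge : A (c (n - 1)) (c ((n - 1) + 1)) ≠ 0 := hcpath (n - 1) (by omega)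
    have hn1 : (n - 1) + 1 = n := by omega
    rw [hn1] at hedge
    set p := c (n - 1)
    set q := c n
    have hqp : q ≠ p := fun h => hprev (by rw [← h, hPn])
    have hApq : 0 < A p q := lt_of_le_of_ne (hA p q) (Ne.symm hedge)
    have hMqp : 0 < M q p := by
      rw [hMoffval q p hqp, ← hsym.apply q p]
      exact mul_pos hν hApq
    have hterms : ∀ i : Fin ℓ, i ∈ univ → 0 ≤ M q i * x i := by
      intro i _
      rcases eq_or_ne i q with rfl | hiq
      · rw [hPn]; simp
      · exact mul_nonneg (hMoff q i (Ne.symm hiq)) (hx0 i)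
    have hrq : 0 < ∑ i, M q i * x i := by
      have h1 : M q p * x p ≤ ∑ i, M q i * x i :=
        Finset.single_le_sum hterms (mem_univ p)
      have h2 : 0 < M q p * x p := mul_pos hMqp hprevpos
      linarith
    have hcq : 0 < cfun q := by
      simp only [hcdef]
      rw [hPn]
      simpa using hrq
    have := hcle q (by rw [hPn]; exact hLinv)
    linarith
  -- all coordinates below 1/ℓ
  have hlt : ∀ j, x j < L⁻¹ := by
    intro j
    by_contra hcon
    have hxj : x j = L⁻¹ := le_antisymm (hx1 j) (not_lt.mp hcon)
    have hge := hcge j (by rw [hxj]; exact hLinv)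
    have hsumle : ∑ k, M j k * x k ≤ (lam j - gam j) * L⁻¹ := by
      rw [← hrowsum j, Finset.sum_mul]
      refine Finset.sum_le_sum fun i _ => ?_
      rcases eq_or_ne i j with rfl | hij
      · rw [hxj]
      · exact mul_le_mul_of_nonneg_left (hx1 i) (hMoff j i (Ne.symm hij))
    have hclt : cfun j < 0 := by
      simp only [hcdef]
      rw [hxj]
      have hLL : L * L⁻¹ = 1 := mul_inv_cancel₀ (ne_of_gt hL)
      have h2 : L * lam j * (L⁻¹) ^ 2 = lam j * L⁻¹ := by
        field_simp
      rw [h2]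
      have := hgam j
      nlinarith [mul_pos (hgam j) hLinv]
    linarith
  have hzero : ∀ j, cfun j = 0 := fun j => le_antisymm (hcle j (hlt j)) (hcge j (hpos j))
  have hkey : ∀ j, ∑ k, M j k * x k = L * lam j * x j ^ 2 := by
    intro j
    have := hzero j
    simp only [hcdef] at this
    linarith
  -- conversion between the stated equation and the matrix form
  have hconv : ∀ (y : Fin ℓ → ℝ) (j : Fin ℓ),
      lam j * (1 - L * y j) * y j - gam j * y j
        + ν * ∑ k ∈ univ.erase j, (A k j * y k - A j k * y j)
      = (∑ k, M j k * y k) - L * lam j * y j ^ 2 := by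
    intro y j
    rw [← Finset.add_sum_erase _ (fun k => M j k * y k) (mem_univ j)]
    have h1 : ∑ k ∈ univ.erase j, M j k * y k = ν * ∑ k ∈ univ.erase j, A j k * y k := by
      rw [Finset.mul_sum]
      refine Finset.sum_congr rfl fun k hk => ?_
      rw [hMoffval j k (Ne.symm (Finset.ne_of_mem_erase hk))]
      ring
    have h2 : ∑ k ∈ univ.erase j, (A k j * y k - A j k * y j)
        = (∑ k ∈ univ.erase j, A j k * y k) - (∑ k ∈ univ.erase j, A j k) * y j := by
      rw [Finset.sum_sub_distrib, Finset.sum_mul]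
      congr 1
      exact Finset.sum_congr rfl fun k _ => by rw [hsym.apply j k]
    rw [h1, h2]
    have h3 : M j j = lam j - gam j - ν * ∑ i ∈ univ.erase j, A j i := by
      simp [hMdef]
    rw [h3]
    ring
  -- solution property for x
  refine ⟨x, ⟨fun j => ⟨hpos j, hlt j⟩, fun j => ?_⟩, ?_⟩
  · rw [hconv x j, hkey j]
    ring
  -- uniqueness
  · intro y ⟨hyb, hye⟩
    have hykey : ∀ j, ∑ k, M j k * y k = L * lam j * y j ^ 2 := by
      intro j
      have := hye j
      rw [hconv y j] at this
      linarith
    have hFinNe : Nonempty (Fin ℓ) := ⟨⟨0, hℓ⟩⟩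
    have hle2 : ∀ u v : Fin ℓ → ℝ, (∀ j, 0 < u j) → (∀ j, 0 < v j) →
        (∀ j, ∑ k, M j k * u k = L * lam j * u j ^ 2) →
        (∀ j, ∑ k, M j k * v k = L * lam j * v j ^ 2) → ∀ j, u j ≤ v j := by
      intro u v hu hv hequ heqv j
      have hne : (univ : Finset (Fin ℓ)).Nonempty := univ_nonempty
      set t := univ.sup' hne (fun i => u i / v i) with htdef2
      obtain ⟨m, -, hm⟩ := Finset.exists_mem_eq_sup' hne (fun i => u i / v i)
      have htv : ∀ i, u i ≤ t * v i := by
        intro i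
        have h := Finset.le_sup' (fun i => u i / v i) (mem_univ i)
        rw [← htdef2] at h
        rw [div_le_iff₀ (hv i)] at h
        linarith
      rcases le_or_gt t 1 with ht | ht
      · have := htv j
        nlinarith [hv j]
      · exfalso
        have hum : u m = t * v m := by
          rw [htdef2, hm]
          field_simp
          rw [mul_div_assoc, div_self (ne_of_gt (hv m)), mul_one]
        have hsum : ∑ k, M m k * u k ≤ t * ∑ k, M m k * v k := by
          rw [Finset.mul_sum]
          refine Finset.sum_le_sum fun i _ => ?_
          rcases eq_or_ne i m with rfl | hi
          · rw [hum]; ring_nf; exact le_refl _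
          · have h1 := hMoff m i (Ne.symm hi)
            have h2 := htv i
            nlinarith
        rw [hequ m, heqv m] at hsum
        have h3 := hu m
        have h4 := hv m
        have h5 := hlam m
        have hP : 0 < L * lam m * v m ^ 2 := mul_pos (mul_pos hL h5) (pow_pos h4 2)
        have h6 : L * lam m * (t * v m) ^ 2 ≤ t * (L * lam m * v m ^ 2) := by
          rw [← hum]; exact hsum
        nlinarith [h6, hP, mul_pos (mul_pos (lt_trans one_pos ht) hP) (sub_pos.mpr ht)]
    funext j
    exact le_antisymm (hle2 y x (fun i => (hyb i).1) hpos hykey hkey j)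
      (hle2 x y hpos (fun i => (hyb i).1) hkey hykey j)
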